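/- (Admissibility of the prefix-alignment heuristic) Let N^S be the SPN of a trace σ of length n and a WF-net N, let c : T^S → ℝ_{≥0} be a cost function, and let h be the prefix-alignment heuristic defined by the corresponding integer linear program. Then for every reachable marking M ∈ R(N^S, M_i^S) and every firing sequence σ_t ∈ (T^S)* with (N^S, M) →^{σ_t} (N^S, M') ending in a goal marking M' (i.e., M'(p'_n) ≥ 1), it holds that h(M) ≤ Σ_{t occurring in σ_t} c(t) (counting multiplicities). Hence h(M) is a lower bound on the remaining cost from M to any goal marking, i.e., h is admissible. -/

import Mathlib

open scoped ENNReal NNReal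

/-- A transition ("move") of a synchronous product net (SPN): a log move `(t'_j, ≫)`,
a model move `(≫, t)`, or a synchronous move `(t'_j, t)`. -/
inductive Move (T : Type) where
  | log   (j : ℕ)
  | model (t : T)
  | sync  (j : ℕ) (t : T)
  deriving DecidableEq

/-- A WF-net: a Petri net with labelled transitions (`none` represents the silent
label `τ`), a unique source place and a unique sink place.  `pre t` is the preset
`•t` and `post t` is the postset `t•` of a transition `t`. -/
structure WFNet (P T A : Type) where
  pre    : T → Set P
  post   : T → Set P
  label  : T → Option A
  source : P
  sink   : P
  source_ne_sink : source ≠ sink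
  no_arc_into_source : ∀ t, source ∉ post t
  no_arc_out_of_sink : ∀ t, sink ∉ pre t

/-- A marking of the SPN: a multiset over the SPN places, where `Sum.inl j` is the
trace-net place `p'_j` and `Sum.inr p` is a process-model place. -/
abbrev Marking (P : Type) := (ℕ ⊕ P) → ℕ

namespace SPN

variable {P T A : Type}

/-- The places `P^S = P^σ ∪ P` of the SPN of a trace `σ`: the trace-net places
`p'_0, …, p'_{|σ|}` together with all process-model places. -/
def places (P : Type) {A : Type} (σ : List A) : Set (ℕ ⊕ P) :=
  fun q => match q with
  | Sum.inl j => j ≤ σ.length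
  | Sum.inr _ => True

/-- The transitions `T^S` of the SPN of trace `σ` and WF-net `N`: log moves
`(t'_j, ≫)` for `1 ≤ j ≤ |σ|`, model moves `(≫, t)` for all model transitions `t`,
and synchronous moves `(t'_j, t)` whenever `λ(t) = σ(j) ≠ τ`. -/
def transitions (σ : List A) (N : WFNet P T A) : Set (Move T) :=
  fun m => match m with
  | Move.log j => 1 ≤ j ∧ j ≤ σ.length
  | Move.model _ => True
  | Move.sync j t => 1 ≤ j ∧ ∃ a, σ[j - 1]? = some a ∧ N.label t = some a

/-- Preset `•m` of an SPN transition `m`. -/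
def pre (N : WFNet P T A) : Move T → Set (ℕ ⊕ P)
  | Move.log j => {Sum.inl (j - 1)}
  | Move.model t => Sum.inr '' N.pre t
  | Move.sync j t => {Sum.inl (j - 1)} ∪ Sum.inr '' N.pre t

/-- Postset `m•` of an SPN transition `m`. -/
def post (N : WFNet P T A) : Move T → Set (ℕ ⊕ P)
  | Move.log j => {Sum.inl j}
  | Move.model t => Sum.inr '' N.post t
  | Move.sync j t => {Sum.inl j} ∪ Sum.inr '' N.post t

/-- The flow relation `F^S` of the SPN: arcs from places to transitions and from
transitions to places. -/
def flow (σ : List A) (N : WFNet P T A) :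
    Set (((ℕ ⊕ P) × Move T) ⊕ (Move T × (ℕ ⊕ P))) :=
  fun f => match f with
  | Sum.inl (q, m) => m ∈ transitions σ N ∧ q ∈ pre N m
  | Sum.inr (m, q) => m ∈ transitions σ N ∧ q ∈ post N m

open Classical in
/-- The initial marking `M_i^S = [p'_0, p_i]` of the SPN. -/
noncomputable def init (σ : List A) (N : WFNet P T A) : Marking P :=
  fun q => if q = Sum.inl 0 ∨ q = Sum.inr N.source then 1 else 0

open Classical in
/-- The final marking `M_f^S = [p'_{|σ|}, p_o]` of the SPN. -/
noncomputable def final (σ : List A) (N : WFNet P T A) : Marking P :=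
  fun q => if q = Sum.inl σ.length ∨ q = Sum.inr N.sink then 1 else 0

/-- `m` is enabled in marking `M`, `(N^S, M)[m⟩`, w.r.t. the transition set `S`. -/
def Enabled (N : WFNet P T A) (S : Set (Move T)) (M : Marking P) (m : Move T) : Prop :=
  m ∈ S ∧ ∀ q ∈ pre N m, 0 < M q

open Classical in
/-- The marking obtained by firing transition `m` in marking `M`. -/
noncomputable def fire (N : WFNet P T A) (m : Move T) (M : Marking P) : Marking P :=
  fun q =>
    if q ∈ pre N m ∧ q ∉ post N m then M q - 1
    else if q ∈ post N m ∧ q ∉ pre N m then M q + 1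
    else M q

/-- `FiresTo N S M ts M'`: firing the sequence `ts` of transitions from marking `M`
yields marking `M'` (each fired transition being enabled). -/
def FiresTo (N : WFNet P T A) (S : Set (Move T)) :
    Marking P → List (Move T) → Marking P → Prop
  | M, [], M' => M = M'
  | M, m :: ms, M' => Enabled N S M m ∧ FiresTo N S (fire N m M) ms M'

/-- `M` is reachable from `M₀`. -/
def Reachable (N : WFNet P T A) (S : Set (Move T)) (M₀ M : Marking P) : Prop :=
  ∃ ts, FiresTo N S M₀ ts M

/-- `M ∈ B(P^S)` for the SPN of `σ`: the marking only uses places of the SPN of `σ`. -/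
def SupportedOn (σ : List A) (M : Marking P) : Prop :=
  ∀ q, 0 < M q → q ∈ places P σ

/-- The standard cost function: synchronous moves and invisible model moves cost `0`,
log moves and visible model moves cost `1`. -/
def stdCost (N : WFNet P T A) : Move T → ℝ≥0
  | Move.log _ => 1
  | Move.model t => match N.label t with | none => 0 | some _ => 1
  | Move.sync _ _ => 0

/-- Total cost of a firing sequence. -/
noncomputable def seqCost (c : Move T → ℝ≥0) (ts : List (Move T)) : ℝ≥0∞ :=
  (ts.map fun m => (c m : ℝ≥0∞)).sum

/-- Feasible solutions of the ILP defining the prefix-alignment heuristic at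
marking `M`: for every trace-net place the marking equation must reach the final
marking exactly, for every process-model place non-negativity suffices. -/
def Feasible (σ : List A) (N : WFNet P T A) (M : Marking P) (x : Move T → ℕ) : Prop :=
  (∀ j ≤ σ.length,
      (M (Sum.inl j) : ℤ)
        + ∑ᶠ m ∈ {m | m ∈ transitions σ N ∧ Sum.inl j ∈ post N m}, (x m : ℤ)
        - ∑ᶠ m ∈ {m | m ∈ transitions σ N ∧ Sum.inl j ∈ pre N m}, (x m : ℤ)
      = (final σ N (Sum.inl j) : ℤ))
  ∧ ∀ p : P,
      (0 : ℤ) ≤ (M (Sum.inr p) : ℤ)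
        + ∑ᶠ m ∈ {m | m ∈ transitions σ N ∧ Sum.inr p ∈ post N m}, (x m : ℤ)
        - ∑ᶠ m ∈ {m | m ∈ transitions σ N ∧ Sum.inr p ∈ pre N m}, (x m : ℤ)

/-- The prefix-alignment heuristic `h(M)`: the optimal value of the ILP
(`∞` if no feasible solution exists). -/
noncomputable def heuristic (σ : List A) (N : WFNet P T A) (c : Move T → ℝ≥0)
    (M : Marking P) : ℝ≥0∞ :=
  ⨅ (x : Move T → ℕ) (_ : Feasible σ N M x),
    ∑ᶠ m ∈ transitions σ N, (x m : ℝ≥0∞) * (c m : ℝ≥0∞)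

/-- Minimal cost of a firing sequence from `M₀` to `M` (`∞` if `M` is unreachable). -/
noncomputable def costToReach (N : WFNet P T A) (S : Set (Move T)) (d : Move T → ℝ≥0)
    (M₀ M : Marking P) : ℝ≥0∞ :=
  ⨅ (ts : List (Move T)) (_ : FiresTo N S M₀ ts M), seqCost d ts

/-- Minimal cost of a firing sequence from `M` to a goal marking, i.e. a marking
with a token in the trace-net place `p'_n`. -/
noncomputable def costToGoal (N : WFNet P T A) (S : Set (Move T)) (d : Move T → ℝ≥0)
    (n : ℕ) (M : Marking P) : ℝ≥0∞ :=
  ⨅ (ts : List (Move T)) (_ : ∃ M', FiresTo N S M ts M' ∧ 1 ≤ M' (Sum.inl n)), seqCost d ts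

end SPN

namespace SPNAux

open SPN Classical

variable {P T A : Type}

/-- Token change of place `q` when firing `m`, as an integer. -/
noncomputable def delta (N : WFNet P T A) (m : Move T) (q : ℕ ⊕ P) : ℤ :=
  (if q ∈ post N m then 1 else 0) - (if q ∈ pre N m then 1 else 0)

lemma fire_int {N : WFNet P T A} {S : Set (Move T)} {M : Marking P} {m : Move T}
    (h : Enabled N S M m) (q : ℕ ⊕ P) :
    ((fire N m M q : ℕ) : ℤ) = (M q : ℤ) + delta N m q := by
  unfold fire delta
  by_cases h1 : q ∈ pre N m <;> by_cases h2 : q ∈ post N m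
  · rw [if_neg (by tauto), if_neg (by tauto), if_pos h2, if_pos h1]
    push_cast; ring
  · have := h.2 q h1
    rw [if_pos ⟨h1, h2⟩, if_neg h2, if_pos h1]
    omega
  · rw [if_neg (by tauto), if_pos ⟨h2, h1⟩, if_pos h2, if_neg h1]
    push_cast; ring
  · rw [if_neg (by tauto), if_neg (by tauto), if_neg h2, if_neg h1]
    push_cast; ring

lemma firesTo_mem {N : WFNet P T A} {S : Set (Move T)} {M M' : Marking P} {ts : List (Move T)}
    (h : FiresTo N S M ts M') : ∀ m ∈ ts, m ∈ S := by
  induction ts generalizing M with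
  | nil => simp
  | cons a l ih =>
    intro m hm
    obtain ⟨hen, hrest⟩ := h
    rcases List.mem_cons.1 hm with rfl | hm
    · exact hen.1
    · exact ih hrest m hm

lemma firesTo_append {N : WFNet P T A} {S : Set (Move T)} {M1 M2 M3 : Marking P}
    {l1 l2 : List (Move T)} (h1 : FiresTo N S M1 l1 M2) (h2 : FiresTo N S M2 l2 M3) :
    FiresTo N S M1 (l1 ++ l2) M3 := by
  induction l1 generalizing M1 with
  | nil => cases h1; simpa using h2
  | cons a l ih => exact ⟨h1.1, ih h1.2⟩

lemma firesTo_int {N : WFNet P T A} {S : Set (Move T)} {M M' : Marking P} {ts : List (Move T)}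
    (h : FiresTo N S M ts M') (q : ℕ ⊕ P) :
    (M' q : ℤ) = (M q : ℤ) + (ts.map (fun m => delta N m q)).sum := by
  induction ts generalizing M with
  | nil => cases h; simp
  | cons a l ih =>
    obtain ⟨hen, hrest⟩ := h
    rw [ih hrest, fire_int hen]
    simp only [List.map_cons, List.sum_cons]
    ring

lemma delta_model {N : WFNet P T A} (t : T) (j : ℕ) :
    delta N (Move.model t) (Sum.inl j) = 0 := by
  simp [delta, pre, post]

lemma delta_log {N : WFNet P T A} (j' j : ℕ) :
    delta N (Move.log j') (Sum.inl j)
      = (if j = j' then 1 else 0) - (if j = j' - 1 then 1 else 0) := by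
  simp [delta, pre, post]

lemma delta_sync {N : WFNet P T A} (j' : ℕ) (t : T) (j : ℕ) :
    delta N (Move.sync j' t) (Sum.inl j)
      = (if j = j' then 1 else 0) - (if j = j' - 1 then 1 else 0) := by
  simp [delta, pre, post]

lemma trans_log_bounds {σ : List A} {N : WFNet P T A} {j' : ℕ}
    (hm : Move.log (T := T) j' ∈ transitions σ N) : 1 ≤ j' ∧ j' ≤ σ.length := hm

lemma trans_sync_bounds {σ : List A} {N : WFNet P T A} {j' : ℕ} {t : T}
    (hm : Move.sync j' t ∈ transitions σ N) : 1 ≤ j' ∧ j' ≤ σ.length := by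
  obtain ⟨h1, a, ha, -⟩ := hm
  obtain ⟨hlt, -⟩ := List.getElem?_eq_some_iff.1 ha
  omega

lemma delta_inl_gt {σ : List A} {N : WFNet P T A} {m : Move T}
    (hm : m ∈ transitions σ N) {j : ℕ} (hj : σ.length < j) :
    delta N m (Sum.inl j) = 0 := by
  cases m with
  | model t => exact delta_model t j
  | log j' =>
    obtain ⟨h1, h2⟩ := trans_log_bounds hm
    rw [delta_log, if_neg (by omega), if_neg (by omega)]
    ring
  | sync j' t =>
    obtain ⟨h1, h2⟩ := trans_sync_bounds hm
    rw [delta_sync, if_neg (by omega), if_neg (by omega)]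
    ring

lemma sum_delta_inl {σ : List A} {N : WFNet P T A} {m : Move T}
    (hm : m ∈ transitions σ N) :
    ∑ j ∈ Finset.range (σ.length + 1), delta N m (Sum.inl j) = 0 := by
  have key : ∀ j' : ℕ, 1 ≤ j' → j' ≤ σ.length →
      ∑ j ∈ Finset.range (σ.length + 1),
        ((if j = j' then (1 : ℤ) else 0) - (if j = j' - 1 then 1 else 0)) = 0 := by
    intro j' h1 h2
    rw [Finset.sum_sub_distrib, Finset.sum_ite_eq' _ j', Finset.sum_ite_eq' _ (j' - 1),
      if_pos (Finset.mem_range.2 (by omega)), if_pos (Finset.mem_range.2 (by omega))]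
    ring
  cases m with
  | model t => simp [delta_model]
  | log j' =>
    obtain ⟨h1, h2⟩ := trans_log_bounds hm
    simp only [delta_log]
    exact key j' h1 h2
  | sync j' t =>
    obtain ⟨h1, h2⟩ := trans_sync_bounds hm
    simp only [delta_sync]
    exact key j' h1 h2

lemma sum_list_swap {β : Type*} (s : Finset ℕ) (l : List β) (g : β → ℕ → ℤ) :
    ∑ j ∈ s, (l.map (fun m => g m j)).sum = (l.map (fun m => ∑ j ∈ s, g m j)).sum := by
  induction l with
  | nil => simp
  | cons a l ih => simp [Finset.sum_add_distrib, ih]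

lemma list_sum_map_sub {β : Type*} (l : List β) (f g : β → ℤ) :
    (l.map (fun m => f m - g m)).sum = (l.map f).sum - (l.map g).sum := by
  induction l with
  | nil => simp
  | cons a l ih =>
    simp only [List.map_cons, List.sum_cons, ih]
    ring

lemma finsum_count [DecidableEq (Move T)] (S : Set (Move T)) (Q : Move T → Prop)
    (ts : List (Move T)) (hts : ∀ m ∈ ts, m ∈ S) :
    (∑ᶠ m ∈ {m | m ∈ S ∧ Q m}, ((ts.count m : ℤ)))
      = (ts.map (fun m => if Q m then (1 : ℤ) else 0)).sum := by
  classical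
  set f : Move T → ℤ := fun m => (ts.count m : ℤ) with hf_def
  have hsupp : {m | m ∈ S ∧ Q m} ∩ Function.support f ⊆ ↑ts.toFinset := by
    intro m hm
    have hne : f m ≠ 0 := hm.2
    rw [hf_def] at hne
    simp only [] at hne
    have : ts.count m ≠ 0 := by exact_mod_cast hne
    simpa [List.mem_toFinset] using List.count_pos_iff.1 (Nat.pos_of_ne_zero this)
  have hfin : ({m | m ∈ S ∧ Q m} ∩ Function.support f).Finite :=
    Set.Finite.subset ts.toFinset.finite_toSet hsupp
  rw [finsum_mem_eq_sum f hfin, Finset.sum_list_map_count]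
  have hsub : hfin.toFinset ⊆ ts.toFinset := by
    intro m hm
    exact_mod_cast hsupp (hfin.mem_toFinset.1 hm)
  rw [show (∑ m ∈ hfin.toFinset, f m)
      = ∑ m ∈ hfin.toFinset, ts.count m • (if Q m then (1 : ℤ) else 0) from
    Finset.sum_congr rfl (by
      intro m hm
      have hmA := (hfin.mem_toFinset.1 hm).1
      rw [if_pos hmA.2]
      simp [hf_def])]
  refine Finset.sum_subset hsub ?_
  intro m hm hnm
  have hnot : ¬ (m ∈ {m | m ∈ S ∧ Q m} ∩ Function.support f) := by
    intro hc
    exact hnm (hfin.mem_toFinset.2 hc)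
  by_cases hQ : Q m
  · have hmS : m ∈ S := hts m (List.mem_toFinset.1 hm)
    have hfm : f m = 0 := by
      by_contra hne
      exact hnot ⟨⟨hmS, hQ⟩, hne⟩
    rw [hf_def] at hfm
    simp only [] at hfm
    have : ts.count m = 0 := by exact_mod_cast hfm
    simp [this]
  · simp [hQ]

lemma finsum_cost [DecidableEq (Move T)] (S : Set (Move T)) (c : Move T → ℝ≥0)
    (ts : List (Move T)) (hts : ∀ m ∈ ts, m ∈ S) :
    (∑ᶠ m ∈ S, ((ts.count m : ℝ≥0∞) * (c m : ℝ≥0∞))) = seqCost c ts := by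
  classical
  set g : Move T → ℝ≥0∞ := fun m => (ts.count m : ℝ≥0∞) * (c m : ℝ≥0∞) with hg_def
  have hsupp : S ∩ Function.support g ⊆ ↑ts.toFinset := by
    intro m hm
    have hne : g m ≠ 0 := hm.2
    have hcount : ts.count m ≠ 0 := by
      intro h0
      exact hne (by simp [hg_def, h0])
    simpa [List.mem_toFinset] using List.count_pos_iff.1 (Nat.pos_of_ne_zero hcount)
  have hfin : (S ∩ Function.support g).Finite :=
    Set.Finite.subset ts.toFinset.finite_toSet hsupp
  rw [finsum_mem_eq_sum g hfin]
  have hsub : hfin.toFinset ⊆ ts.toFinset := by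
    intro m hm
    exact_mod_cast hsupp (hfin.mem_toFinset.1 hm)
  have hstep : ∑ m ∈ hfin.toFinset, g m = ∑ m ∈ ts.toFinset, g m := by
    refine Finset.sum_subset hsub ?_
    intro m hm hnm
    have hmS : m ∈ S := hts m (List.mem_toFinset.1 hm)
    by_contra hne
    exact hnm (hfin.mem_toFinset.2 ⟨hmS, hne⟩)
  rw [hstep]
  unfold seqCost
  rw [Finset.sum_list_map_count]
  refine Finset.sum_congr rfl ?_
  intro m _
  simp [hg_def, nsmul_eq_mul]

end SPNAux

/-- **Admissibility of the prefix-alignment heuristic.**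
For every reachable marking `M` of the SPN and every firing sequence `ts` from `M`
to a goal marking `M'` (a marking with a token in the last trace-net place `p'_n`),
the heuristic value `h(M)` is at most the total cost of `ts` (counting
multiplicities); hence `h` is a lower bound on the remaining cost to any goal
marking, i.e. `h` is admissible. -/
theorem heuristic_admissible
    {P T A : Type} (N : WFNet P T A) (σ : List A) (c : Move T → ℝ≥0)
    (M : Marking P) (hM : SPN.Reachable N (SPN.transitions σ N) (SPN.init σ N) M)
    (ts : List (Move T)) (M' : Marking P)
    (hfire : SPN.FiresTo N (SPN.transitions σ N) M ts M')
    (hgoal : 1 ≤ M' (Sum.inl σ.length)) :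
    SPN.heuristic σ N c M ≤ SPN.seqCost c ts := by
  classical
  obtain ⟨us, hus⟩ := hM
  set n := σ.length with hn
  have hcomb : SPN.FiresTo N (SPN.transitions σ N) (SPN.init σ N) (us ++ ts) M' :=
    SPNAux.firesTo_append hus hfire
  have hmem_all : ∀ m ∈ us ++ ts, m ∈ SPN.transitions σ N := SPNAux.firesTo_mem hcomb
  have hmem_ts : ∀ m ∈ ts, m ∈ SPN.transitions σ N := SPNAux.firesTo_mem hfire
  have hinit : ∀ j : ℕ, ((SPN.init σ N (Sum.inl j) : ℕ) : ℤ) = if j = 0 then 1 else 0 := by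
    intro j
    unfold SPN.init
    by_cases h : j = 0 <;> simp [h]
  -- no tokens beyond the last trace place
  have hgt : ∀ j, n < j → M' (Sum.inl j) = 0 := by
    intro j hj
    have h1 := SPNAux.firesTo_int hcomb (Sum.inl j)
    have h2 : ((us ++ ts).map (fun m => SPNAux.delta N m (Sum.inl j))).sum = 0 :=
      List.sum_eq_zero (by
        intro x hx
        obtain ⟨m, hm, rfl⟩ := List.mem_map.1 hx
        exact SPNAux.delta_inl_gt (hmem_all m hm) hj)
    rw [h2, hinit j, if_neg (by omega)] at h1
    omega
  -- exactly one token on the trace places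
  have hsum : ∑ j ∈ Finset.range (n + 1), M' (Sum.inl j) = 1 := by
    have hZ : (∑ j ∈ Finset.range (n + 1), (M' (Sum.inl j) : ℤ)) = 1 := by
      calc ∑ j ∈ Finset.range (n + 1), (M' (Sum.inl j) : ℤ)
          = ∑ j ∈ Finset.range (n + 1), ((SPN.init σ N (Sum.inl j) : ℤ)
              + ((us ++ ts).map (fun m => SPNAux.delta N m (Sum.inl j))).sum) :=
            Finset.sum_congr rfl (fun j _ => SPNAux.firesTo_int hcomb (Sum.inl j))
        _ = (∑ j ∈ Finset.range (n + 1), (SPN.init σ N (Sum.inl j) : ℤ))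
              + ∑ j ∈ Finset.range (n + 1),
                  ((us ++ ts).map (fun m => SPNAux.delta N m (Sum.inl j))).sum :=
            Finset.sum_add_distrib
        _ = 1 + 0 := by
            congr 1
            · rw [Finset.sum_congr rfl (fun j _ => hinit j),
                Finset.sum_ite_eq' (Finset.range (n + 1)) 0 (fun _ => (1 : ℤ)),
                if_pos (Finset.mem_range.2 (by omega))]
            · rw [SPNAux.sum_list_swap]
              exact List.sum_eq_zero (by
                intro x hx
                obtain ⟨m, hm, rfl⟩ := List.mem_map.1 hx
                exact SPNAux.sum_delta_inl (hmem_all m hm))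
        _ = 1 := by ring
    exact_mod_cast hZ
  have hnmem : n ∈ Finset.range (n + 1) := Finset.mem_range.2 (Nat.lt_succ_self n)
  have hMn : M' (Sum.inl n) = 1 := by
    have hle : M' (Sum.inl n) ≤ 1 := by
      rw [← hsum]
      exact Finset.single_le_sum (f := fun k => M' (Sum.inl k)) (fun i _ => Nat.zero_le _) hnmem
    omega
  have hMlt : ∀ j, j ≤ n → j ≠ n → M' (Sum.inl j) = 0 := by
    intro j hjle hjn
    have hjmem : j ∈ Finset.range (n + 1) := Finset.mem_range.2 (by omega)
    have h1 : M' (Sum.inl j) + ∑ k ∈ (Finset.range (n + 1)).erase j, M' (Sum.inl k) = 1 := by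
      rw [Finset.add_sum_erase _ (fun k => M' (Sum.inl k)) hjmem]
      exact hsum
    have h2 : M' (Sum.inl n) ≤ ∑ k ∈ (Finset.range (n + 1)).erase j, M' (Sum.inl k) :=
      Finset.single_le_sum (f := fun k => M' (Sum.inl k)) (fun i _ => Nat.zero_le _)
        (Finset.mem_erase.2 ⟨fun h => hjn h.symm, hnmem⟩)
    omega
  have hfinal : ∀ j : ℕ, ((SPN.final σ N (Sum.inl j) : ℕ) : ℤ) = if j = n then 1 else 0 := by
    intro j
    unfold SPN.final
    by_cases h : j = n <;> simp [h, hn]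
  -- the candidate ILP solution: occurrence counts of `ts`
  set x : Move T → ℕ := fun m => ts.count m with hx_def
  have key : ∀ q : ℕ ⊕ P,
      ((∑ᶠ m ∈ {m | m ∈ SPN.transitions σ N ∧ q ∈ SPN.post N m}, ((x m : ℤ)))
        - ∑ᶠ m ∈ {m | m ∈ SPN.transitions σ N ∧ q ∈ SPN.pre N m}, ((x m : ℤ)))
      = (ts.map (fun m => SPNAux.delta N m q)).sum := by
    intro q
    rw [hx_def]
    rw [SPNAux.finsum_count (SPN.transitions σ N) (fun m => q ∈ SPN.post N m) ts hmem_ts,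
      SPNAux.finsum_count (SPN.transitions σ N) (fun m => q ∈ SPN.pre N m) ts hmem_ts,
      ← SPNAux.list_sum_map_sub]
    rfl
  have hfeas : SPN.Feasible σ N M x := by
    constructor
    · intro j hj
      have heq := SPNAux.firesTo_int hfire (Sum.inl j)
      have hval : (M' (Sum.inl j) : ℤ) = if j = n then 1 else 0 := by
        by_cases h : j = n
        · subst h; rw [hMn, if_pos rfl]; norm_num
        · rw [hMlt j hj h, if_neg h]; norm_num
      have := key (Sum.inl j)
      rw [hfinal j]
      linarith [heq, this, hval]
    · intro p
      have heq := SPNAux.firesTo_int hfire (Sum.inr p)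
      have := key (Sum.inr p)
      have hnn : (0 : ℤ) ≤ (M' (Sum.inr p) : ℤ) := Int.natCast_nonneg _
      linarith [heq, this, hnn]
  calc SPN.heuristic σ N c M
      ≤ ∑ᶠ m ∈ SPN.transitions σ N, ((x m : ℝ≥0∞) * (c m : ℝ≥0∞)) := iInf₂_le x hfeas
    _ = SPN.seqCost c ts := SPNAux.finsum_cost (SPN.transitions σ N) c ts hmem_ts
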